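/- arXiv:2509.13751 — 3 statements merged into one kernel-verified Lean document; each statement's English description precedes it below -/
import Mathlib

section
/- Let n ≥ 1. There exists a constant M₀ > 0 (independent of k) such that for every k ∈ ℝⁿ with ‖k‖₁ := Σ_{j=1}^n |k_j| > 0, setting a₀ := (1/2)·arsinh(π/(2‖k‖₁)) and defining f_k : ℝⁿ → ℝ by f_k(x) = tanh(Σ_{j=1}^n k_j · sin x_j), the Fourier coefficients f̂_k(m) := (2π)^{-n} ∫_{[0,2π]^n} f_k(x) · exp(−i Σ_{j=1}^n m_j x_j) dx satisfy |f̂_k(m)| ≤ M₀ · exp(−a₀ · ‖m‖₁) for every m ∈ ℤⁿ, where ‖m‖₁ = Σ_{j=1}^n |m_j|. -/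
lemma sin_im_eq (z : ℂ) : (Complex.sin z).im = Real.cos z.re * Real.sinh z.im := by
  conv_lhs => rw [← Complex.re_add_im z]
  rw [Complex.sin_add, Complex.cos_mul_I, Complex.sin_mul_I]
  simp [← Complex.ofReal_sin, ← Complex.ofReal_cos, ← Complex.ofReal_cosh, ← Complex.ofReal_sinh]

lemma abs_sin_im_le (z : ℂ) : |(Complex.sin z).im| ≤ Real.sinh |z.im| := by
  rw [sin_im_eq, abs_mul, ← Real.abs_sinh]
  nlinarith [Real.abs_cos_le_one z.re, abs_nonneg (Real.sinh z.im)]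

lemma cosh_re_im (z : ℂ) : Complex.cosh z
    = (Real.cosh z.re * Real.cos z.im : ℝ) + (Real.sinh z.re * Real.sin z.im : ℝ) * Complex.I := by
  conv_lhs => rw [← Complex.re_add_im z]
  rw [Complex.cosh_add, Complex.cosh_mul_I, Complex.sinh_mul_I]
  push_cast [← Complex.ofReal_cosh, ← Complex.ofReal_sinh, ← Complex.ofReal_cos,
    ← Complex.ofReal_sin]
  ring

lemma sinh_re_im (z : ℂ) : Complex.sinh z
    = (Real.sinh z.re * Real.cos z.im : ℝ) + (Real.cosh z.re * Real.sin z.im : ℝ) * Complex.I := by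
  conv_lhs => rw [← Complex.re_add_im z]
  rw [Complex.sinh_add, Complex.cosh_mul_I, Complex.sinh_mul_I]
  push_cast [← Complex.ofReal_cosh, ← Complex.ofReal_sinh, ← Complex.ofReal_cos,
    ← Complex.ofReal_sin]
  ring

lemma sq_abs_cosh (z : ℂ) : (‖Complex.cosh z‖)^2
    = Real.cosh z.re ^2 * Real.cos z.im ^2 + Real.sinh z.re ^2 * Real.sin z.im ^2 := by
  rw [← Complex.normSq_eq_norm_sq, cosh_re_im]
  simp [Complex.normSq_apply, ← Complex.ofReal_cos, ← Complex.ofReal_sin,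
    ← Complex.ofReal_cosh, ← Complex.ofReal_sinh]
  ring

lemma sq_abs_sinh (z : ℂ) : (‖Complex.sinh z‖)^2
    = Real.sinh z.re ^2 * Real.cos z.im ^2 + Real.cosh z.re ^2 * Real.sin z.im ^2 := by
  rw [← Complex.normSq_eq_norm_sq, sinh_re_im]
  simp [Complex.normSq_apply, ← Complex.ofReal_cos, ← Complex.ofReal_sin,
    ← Complex.ofReal_cosh, ← Complex.ofReal_sinh]
  ring

lemma cosh_ne_zero_of_im_lt (z : ℂ) (h : |z.im| < Real.pi/2) : Complex.cosh z ≠ 0 := by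
  intro h0
  have h1 : 0 < Real.cos z.im := Real.cos_pos_of_mem_Ioo ⟨by cases abs_lt.1 h; linarith, (abs_lt.1 h).2⟩
  have h2 := sq_abs_cosh z
  rw [h0] at h2
  simp at h2
  have hc1 : (0:ℝ) ≤ (Real.cosh z.re ^ 2 - 1) * Real.cos z.im ^ 2 :=
    mul_nonneg (by nlinarith [Real.one_le_cosh z.re]) (sq_nonneg _)
  nlinarith [mul_pos h1 h1, mul_nonneg (sq_nonneg (Real.sinh z.re)) (sq_nonneg (Real.sin z.im))]

lemma abs_tanh_le_one (z : ℂ) (h : |z.im| ≤ Real.pi/4) : ‖Complex.tanh z‖ ≤ 1 := by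
  have hsc : Real.sin z.im ^ 2 ≤ Real.cos z.im ^2 := by
    have h2 : 0 ≤ Real.cos (2 * z.im) := by
      apply Real.cos_nonneg_of_mem_Icc
      constructor <;> [skip; skip] <;> cases abs_le.1 h <;> linarith
    nlinarith [Real.cos_two_mul' z.im]
  have hc : Complex.cosh z ≠ 0 := cosh_ne_zero_of_im_lt z (by nlinarith [Real.pi_pos])
  rw [Complex.tanh_eq_sinh_div_cosh, norm_div, div_le_one (by
    have := norm_nonneg (Complex.cosh z)
    rcases this.lt_or_eq with h' | h'
    · exact h'
    · exact absurd ((norm_eq_zero).1 h'.symm) hc)]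
  have h1 := sq_abs_sinh z
  have h2 := sq_abs_cosh z
  nlinarith [norm_nonneg (Complex.sinh z), norm_nonneg (Complex.cosh z),
    Real.cosh_sq z.re, Real.sinh_sq z.re, sq_nonneg (Real.sin z.im), sq_nonneg (Real.cos z.im)]

lemma continuous_tanh_comp {α : Type*} [TopologicalSpace α] {A : α → ℂ}
    (hA : Continuous A) (hnz : ∀ x, Complex.cosh (A x) ≠ 0) :
    Continuous fun x => Complex.tanh (A x) := by
  simp only [Complex.tanh_eq_sinh_div_cosh]
  exact (Complex.continuous_sinh.comp hA).div (Complex.continuous_cosh.comp hA) hnz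

lemma differentiableAt_tanh_comp {A : ℂ → ℂ} {z : ℂ}
    (hA : DifferentiableAt ℂ A z) (hnz : Complex.cosh (A z) ≠ 0) :
    DifferentiableAt ℂ (fun w => Complex.tanh (A w)) z := by
  simp only [Complex.tanh_eq_sinh_div_cosh]
  exact ((Complex.differentiable_sinh.differentiableAt).comp z hA).div
    ((Complex.differentiable_cosh.differentiableAt).comp z hA) hnz

/-- periodic contour shift for `g(z) = tanh (c + K sin z) * exp (-I m z)` -/
lemma oneD_shift (K : ℝ) (c : ℂ) (m : ℤ) (a d : ℝ) (hd : |d| ≤ a)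
    (hbound : |c.im| + |K| * Real.sinh a ≤ Real.pi/4) :
    ∫ t in (0:ℝ)..(2*Real.pi), Complex.tanh (c + K * Complex.sin t)
        * Complex.exp (-Complex.I * m * t)
    = Complex.exp ((m : ℝ) * d)
        * ∫ t in (0:ℝ)..(2*Real.pi), Complex.tanh (c + K * Complex.sin (t + d * Complex.I))
        * Complex.exp (-Complex.I * m * t) := by
  have hπ := Real.pi_pos
  have hsinh : 0 ≤ Real.sinh a := Real.sinh_nonneg_iff.2 (le_trans (abs_nonneg d) hd)
  set g : ℂ → ℂ := fun z => Complex.tanh (c + K * Complex.sin z)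
      * Complex.exp (-Complex.I * m * z) with hg
  have hper : ∀ z : ℂ, g (z + 2 * Real.pi) = g z := by
    intro z
    have h1 : Complex.sin (z + 2 * Real.pi) = Complex.sin z := Complex.sin_add_two_pi z
    have h2 : Complex.exp (-Complex.I * m * (z + 2 * Real.pi))
        = Complex.exp (-Complex.I * m * z) := by
      rw [show -Complex.I * m * (z + 2 * Real.pi)
          = -Complex.I * m * z + (-m : ℤ) * (2 * Real.pi * Complex.I) by push_cast; ring,
        Complex.exp_add, Complex.exp_int_mul_two_pi_mul_I, mul_one]
    simp only [hg]
    rw [h1, h2]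
  -- differentiability on the rectangle
  have hdiff : ∀ z : ℂ, |z.im| ≤ a → DifferentiableAt ℂ g z := by
    intro z hz
    have harg : |(c + K * Complex.sin z).im| < Real.pi / 2 := by
      have h1 : |(K * Complex.sin z : ℂ).im| ≤ |K| * Real.sinh a := by
        rw [show (K * Complex.sin z : ℂ).im = K * (Complex.sin z).im by
          simp [Complex.mul_im], abs_mul]
        exact mul_le_mul_of_nonneg_left
          (le_trans (abs_sin_im_le z) (Real.sinh_le_sinh.2 hz)) (abs_nonneg K)
      calc |(c + K * Complex.sin z).im| ≤ |c.im| + |(K * Complex.sin z : ℂ).im| := by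
            rw [Complex.add_im]; exact abs_add_le _ _
        _ ≤ Real.pi/4 := by linarith
        _ < Real.pi/2 := by linarith
    have hder : DifferentiableAt ℂ (fun w => c + (K : ℂ) * Complex.sin w) z :=
      (differentiableAt_const _).add ((differentiableAt_const _).mul
        (Complex.differentiable_sin.differentiableAt))
    exact (differentiableAt_tanh_comp hder (cosh_ne_zero_of_im_lt _ harg)).mul
      (Complex.differentiable_exp.differentiableAt.comp z (by fun_prop))
  -- Cauchy rectangle
  have key := Complex.integral_boundary_rect_eq_zero_of_differentiableOn g 0
    (2 * Real.pi + d * Complex.I) (by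
      intro z hz
      rw [Complex.mem_reProdIm] at hz
      refine (hdiff z ?_).differentiableWithinAt
      have h2 := hz.2
      simp only [Complex.zero_im, Complex.add_im, Complex.mul_I_im, Complex.ofReal_re,
        Complex.ofReal_im, Complex.mul_im, Complex.ofReal_re] at h2
      have : z.im ∈ Set.uIcc (0:ℝ) d := by
        convert h2 using 2 <;> simp
      rcases Set.mem_uIcc.1 this with ⟨h3, h4⟩ | ⟨h3, h4⟩
      · rw [abs_of_nonneg h3]; exact h4.trans ((le_abs_self d).trans hd)
      · rw [abs_of_nonpos h4]; linarith [neg_le_abs d])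
  -- simplify the rectangle identity
  have hre0 : (0:ℂ).re = 0 := rfl
  have him0 : (0:ℂ).im = 0 := rfl
  have hrew : (2 * (Real.pi:ℂ) + d * Complex.I).re = 2 * Real.pi := by simp
  have himw : (2 * (Real.pi:ℂ) + d * Complex.I).im = d := by simp
  rw [hre0, him0, hrew, himw] at key
  -- vertical sides cancel by periodicity
  have hvert : ∀ y : ℝ, g ((2*Real.pi : ℝ) + y * Complex.I) = g ((0:ℝ) + y * Complex.I) := by
    intro y
    have := hper ((y : ℝ) * Complex.I)
    calc g ((2*Real.pi : ℝ) + y * Complex.I) = g ((y:ℝ) * Complex.I + 2 * Real.pi) := by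
          push_cast; ring_nf
      _ = g ((y:ℝ) * Complex.I) := this
      _ = g ((0:ℝ) + y * Complex.I) := by push_cast; ring_nf
  have hv : (∫ y : ℝ in (0:ℝ)..d, g ((2*Real.pi:ℝ) + y * Complex.I))
      = ∫ y : ℝ in (0:ℝ)..d, g ((0:ℝ) + y * Complex.I) := by
    exact intervalIntegral.integral_congr (fun y _ => hvert y)
  rw [hv] at key
  have key2 : (∫ x : ℝ in (0:ℝ)..(2*Real.pi), g (x + (0:ℝ) * Complex.I))
      = ∫ x : ℝ in (0:ℝ)..(2*Real.pi), g (x + d * Complex.I) := by linear_combination key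
  have hL : (∫ x : ℝ in (0:ℝ)..(2*Real.pi), g (x + (0:ℝ) * Complex.I))
      = ∫ t in (0:ℝ)..(2*Real.pi), Complex.tanh (c + K * Complex.sin t)
          * Complex.exp (-Complex.I * m * t) := by
    apply intervalIntegral.integral_congr
    intro x _
    simp [hg]
  have hexp : ∀ x : ℝ, Complex.exp (-Complex.I * ↑m * (↑x + ↑d * Complex.I))
      = Complex.exp (((m:ℝ) * d : ℝ)) * Complex.exp (-Complex.I * ↑m * ↑x) := by
    intro x
    rw [← Complex.exp_add]
    congr 1
    have hI : Complex.I * Complex.I = -1 := Complex.I_mul_I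
    push_cast
    linear_combination (-(m:ℂ) * d) * hI
  have hR : (∫ x : ℝ in (0:ℝ)..(2*Real.pi), g (x + d * Complex.I))
      = Complex.exp (((m:ℝ) * d : ℝ))
        * ∫ t in (0:ℝ)..(2*Real.pi), Complex.tanh (c + K * Complex.sin (t + d * Complex.I))
          * Complex.exp (-Complex.I * m * t) := by
    rw [← intervalIntegral.integral_const_mul]
    apply intervalIntegral.integral_congr
    intro x _
    simp only [hg]
    rw [hexp x]
    ring
  rw [hL, hR] at key2
  exact_mod_cast key2

open MeasureTheory in
lemma IND (a : ℝ) (ha : 0 < a) :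
    ∀ n : ℕ, ∀ (k : Fin n → ℝ) (m : Fin n → ℤ) (c : ℂ),
      |c.im| + (∑ j, |k j|) * Real.sinh a ≤ Real.pi/4 →
      ‖∫ x in Set.Icc (0 : Fin n → ℝ) (fun _ => 2*Real.pi),
          Complex.tanh (c + ∑ j, (k j : ℂ) * Complex.sin ((x j : ℝ) : ℂ)) *
            Complex.exp (-Complex.I * ∑ j, (m j : ℂ) * ((x j : ℝ) : ℂ))‖
        ≤ (2*Real.pi)^n * Real.exp (-a * ∑ j, |(m j : ℝ)|) := by
  have hπ := Real.pi_pos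
  have hsinh0 : 0 ≤ Real.sinh a := Real.sinh_nonneg_iff.2 ha.le
  intro n
  induction n with
  | zero =>
    intro k m c hc
    have hIcc : Set.Icc (0 : Fin 0 → ℝ) (fun _ => 2*Real.pi) = Set.univ := by
      ext x
      simp [Set.mem_Icc, Pi.le_def]
    rw [hIcc]
    simp only [Finset.univ_eq_empty, Finset.sum_empty, add_zero, mul_zero, Complex.exp_zero,
      mul_one, pow_zero, neg_zero, Real.exp_zero]
    rw [MeasureTheory.setIntegral_univ, MeasureTheory.integral_const]
    have hvol : (volume : Measure (Fin 0 → ℝ)) Set.univ = 1 := by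
      simp [MeasureTheory.volume_pi, Measure.pi_univ]
    rw [measureReal_def, hvol]
    simp only [ENNReal.toReal_one, one_smul]
    refine le_trans (abs_tanh_le_one c ?_) (le_refl 1)
    simpa using hc
  | succ n ih =>
    intro k m c hc
    -- abbreviations
    set E : Set ℝ := Set.Icc (0:ℝ) (2*Real.pi) with hE
    set Epi : Set (Fin n → ℝ) := Set.Icc (0 : Fin n → ℝ) (fun _ => 2*Real.pi) with hEpi
    set k' : Fin n → ℝ := fun j => k j.succ with hk'
    set m' : Fin n → ℤ := fun j => m j.succ with hm'
    set d0 : ℝ := if 0 ≤ m 0 then -a else a with hd0def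
    have hd0 : |d0| ≤ a := by
      rw [hd0def]; split <;> simp [abs_of_nonneg, abs_of_nonpos, ha.le]
    have hmd0 : ((m 0 : ℝ)) * d0 = -(a * |((m 0 : ℤ) : ℝ)|) := by
      rw [hd0def]
      rcases le_or_gt 0 (m 0) with h | h
      · rw [if_pos h, abs_of_nonneg (by exact_mod_cast h : (0:ℝ) ≤ (m 0 : ℝ))]; ring
      · rw [if_neg (not_le.2 h), abs_of_neg (by exact_mod_cast h : ((m 0 : ℤ):ℝ) < 0)]; ring
    have hsumk : (∑ j, |k j|) = |k 0| + ∑ j, |k' j| := by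
      rw [Fin.sum_univ_succ]
    have hsumm : (∑ j, |((m j : ℤ) : ℝ)|) = |((m 0 : ℤ):ℝ)| + ∑ j, |((m' j : ℤ):ℝ)| := by
      rw [Fin.sum_univ_succ]
    have hknn : 0 ≤ ∑ j, |k' j| := Finset.sum_nonneg fun j _ => abs_nonneg _
    have hcim : |c.im| ≤ Real.pi/4 := by nlinarith [abs_nonneg (k 0), Finset.sum_nonneg (fun j (_ : j ∈ Finset.univ) => abs_nonneg (k j))]
    -- the two integrands on ℝ × (Fin n → ℝ)
    set G₁ : ℝ × (Fin n → ℝ) → ℂ := fun p =>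
      Complex.tanh (c + (k 0 : ℂ) * Complex.sin ((p.1 : ℝ) : ℂ)
          + ∑ j, (k' j : ℂ) * Complex.sin ((p.2 j : ℝ) : ℂ)) *
        (Complex.exp (-Complex.I * (m 0 : ℂ) * ((p.1 : ℝ):ℂ)) *
         Complex.exp (-Complex.I * ∑ j, (m' j : ℂ) * ((p.2 j : ℝ):ℂ))) with hG₁
    set G₂ : ℝ × (Fin n → ℝ) → ℂ := fun p =>
      Complex.tanh (c + (k 0 : ℂ) * Complex.sin (((p.1 : ℝ) : ℂ) + (d0:ℂ) * Complex.I)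
          + ∑ j, (k' j : ℂ) * Complex.sin ((p.2 j : ℝ) : ℂ)) *
        (Complex.exp (-Complex.I * (m 0 : ℂ) * ((p.1 : ℝ):ℂ)) *
         Complex.exp (-Complex.I * ∑ j, (m' j : ℂ) * ((p.2 j : ℝ):ℂ))) with hG₂
    -- imaginary part bound for tanh arguments
    have himsum : ∀ y : Fin n → ℝ, (∑ j, (k' j : ℂ) * Complex.sin ((y j : ℝ):ℂ)).im = 0 := by
      intro y
      rw [Complex.im_sum]
      apply Finset.sum_eq_zero
      intro j _
      simp [Complex.mul_im, sin_im_eq]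
    have him : ∀ (dd t : ℝ), |dd| ≤ a → ∀ y : Fin n → ℝ,
        |(c + (k 0 : ℂ) * Complex.sin (((t:ℝ):ℂ) + (dd:ℂ)*Complex.I)
          + ∑ j, (k' j : ℂ) * Complex.sin ((y j : ℝ):ℂ)).im|
          ≤ |c.im| + |k 0| * Real.sinh a := by
      intro dd t hdd y
      have h2 : |((k 0 : ℂ) * Complex.sin (((t:ℝ):ℂ) + (dd:ℂ)*Complex.I)).im|
          ≤ |k 0| * Real.sinh a := by
        rw [show ((k 0 : ℂ) * Complex.sin (((t:ℝ):ℂ) + (dd:ℂ)*Complex.I)).im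
            = k 0 * (Complex.sin (((t:ℝ):ℂ) + (dd:ℂ)*Complex.I)).im by simp [Complex.mul_im],
          abs_mul]
        refine mul_le_mul_of_nonneg_left ?_ (abs_nonneg _)
        refine le_trans (abs_sin_im_le _) ?_
        refine le_trans (Real.sinh_le_sinh.2 (le_of_eq ?_)) (Real.sinh_le_sinh.2 hdd)
        simp
      rw [Complex.add_im, Complex.add_im, himsum y, add_zero]
      exact le_trans (abs_add_le _ _) (by linarith)
    have hbnd : |c.im| + |k 0| * Real.sinh a ≤ Real.pi/4 := by
      nlinarith
    -- continuity of both integrands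
    have hcontG : ∀ dd : ℝ, |dd| ≤ a → Continuous (fun p : ℝ × (Fin n → ℝ) =>
        Complex.tanh (c + (k 0 : ℂ) * Complex.sin (((p.1 : ℝ) : ℂ) + (dd:ℂ) * Complex.I)
          + ∑ j, (k' j : ℂ) * Complex.sin ((p.2 j : ℝ) : ℂ)) *
        (Complex.exp (-Complex.I * (m 0 : ℂ) * ((p.1 : ℝ):ℂ)) *
         Complex.exp (-Complex.I * ∑ j, (m' j : ℂ) * ((p.2 j : ℝ):ℂ)))) := by
      intro dd hdd
      have hA : Continuous (fun p : ℝ × (Fin n → ℝ) =>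
          c + (k 0 : ℂ) * Complex.sin (((p.1 : ℝ) : ℂ) + (dd:ℂ) * Complex.I)
          + ∑ j, (k' j : ℂ) * Complex.sin ((p.2 j : ℝ) : ℂ)) := by
        apply Continuous.add
        · apply Continuous.add continuous_const
          exact continuous_const.mul (Complex.continuous_sin.comp
            ((Complex.continuous_ofReal.comp continuous_fst).add continuous_const))
        · apply continuous_finset_sum
          intro j _
          exact continuous_const.mul (Complex.continuous_sin.comp
            (Complex.continuous_ofReal.comp ((continuous_apply j).comp continuous_snd)))
      refine Continuous.mul (continuous_tanh_comp hA ?_) ?_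
      · intro p
        apply cosh_ne_zero_of_im_lt
        exact lt_of_le_of_lt (him dd p.1 hdd p.2) (by linarith)
      · apply Continuous.mul
        · exact Complex.continuous_exp.comp (by
            exact continuous_const.mul (Complex.continuous_ofReal.comp continuous_fst))
        · exact Complex.continuous_exp.comp (by
            apply Continuous.mul continuous_const
            apply continuous_finset_sum
            intro j _
            exact continuous_const.mul
              (Complex.continuous_ofReal.comp ((continuous_apply j).comp continuous_snd)))
    have hcont₁ : Continuous G₁ := by
      have := hcontG 0 (by simpa using ha.le)
      simpa [hG₁] using this
    have hcont₂ : Continuous G₂ := by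
      have := hcontG d0 hd0
      simpa [hG₂] using this
    -- integrability on the box
    have hcompact : IsCompact (E ×ˢ Epi) := isCompact_Icc.prod isCompact_Icc
    have hI₁ : IntegrableOn G₁ (E ×ˢ Epi)
        ((volume : Measure ℝ).prod (volume : Measure (Fin n → ℝ))) := by
      rw [← MeasureTheory.Measure.volume_eq_prod]
      exact hcont₁.continuousOn.integrableOn_compact hcompact
    have hI₂ : IntegrableOn G₂ (E ×ˢ Epi)
        ((volume : Measure ℝ).prod (volume : Measure (Fin n → ℝ))) := by
      rw [← MeasureTheory.Measure.volume_eq_prod]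
      exact hcont₂.continuousOn.integrableOn_compact hcompact
    -- Step 1: split off coordinate 0
    set e := MeasurableEquiv.piFinSuccAbove (fun _ : Fin (n+1) => ℝ) 0 with he
    have MP : MeasurePreserving e (volume : Measure (Fin (n+1) → ℝ))
        ((volume : Measure ℝ).prod (volume : Measure (Fin n → ℝ))) := by
      have h := measurePreserving_piFinSuccAbove (fun _ : Fin (n+1) => (volume : Measure ℝ)) 0
      rw [← MeasureTheory.volume_pi, ← MeasureTheory.volume_pi] at h
      exact h
    have hpre : Set.Icc (0 : Fin (n+1) → ℝ) (fun _ => 2*Real.pi) = e ⁻¹' (E ×ˢ Epi) := by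
      ext x
      simp only [Set.mem_Icc, Set.mem_preimage, Set.mem_prod, he,
        MeasurableEquiv.piFinSuccAbove_apply, Pi.le_def, Fin.zero_succAbove, hE, hEpi,
        Pi.zero_apply]
      constructor
      · rintro ⟨h1, h2⟩
        exact ⟨⟨h1 0, h2 0⟩, fun j => h1 j.succ, fun j => h2 j.succ⟩
      · rintro ⟨⟨h1, h2⟩, h3, h4⟩
        exact ⟨fun i => Fin.cases h1 (fun j => h3 j) i, fun i => Fin.cases h2 (fun j => h4 j) i⟩
    have hFG : ∀ x : Fin (n+1) → ℝ,
        Complex.tanh (c + ∑ j, (k j : ℂ) * Complex.sin ((x j : ℝ):ℂ)) *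
          Complex.exp (-Complex.I * ∑ j, (m j : ℂ) * ((x j : ℝ):ℂ)) = G₁ (e x) := by
      intro x
      simp only [hG₁, he, MeasurableEquiv.piFinSuccAbove_apply, Fin.zero_succAbove, hk', hm',
        Fin.insertNthEquiv_symm_apply, Fin.removeNth, Fin.zero_succAbove]
      rw [Fin.sum_univ_succ (f := fun j => (k j : ℂ) * Complex.sin ((x j : ℝ):ℂ)),
          Fin.sum_univ_succ (f := fun j => (m j : ℂ) * ((x j : ℝ):ℂ))]
      rw [← add_assoc, mul_add, Complex.exp_add,
        show -Complex.I * ((m 0 : ℂ) * ((x 0 : ℝ):ℂ)) = -Complex.I * (m 0 : ℂ) * ((x 0:ℝ):ℂ)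
          from (mul_assoc _ _ _).symm, mul_assoc]
    have step1 : (∫ x in Set.Icc (0 : Fin (n+1) → ℝ) (fun _ => 2*Real.pi),
        Complex.tanh (c + ∑ j, (k j : ℂ) * Complex.sin ((x j : ℝ):ℂ)) *
          Complex.exp (-Complex.I * ∑ j, (m j : ℂ) * ((x j : ℝ):ℂ)))
        = ∫ p in E ×ˢ Epi, G₁ p
            ∂((volume : Measure ℝ).prod (volume : Measure (Fin n → ℝ))) := by
      rw [hpre]
      rw [MeasureTheory.integral_congr_ae (MeasureTheory.ae_of_all _ hFG)]
      exact MP.setIntegral_preimage_emb e.measurableEmbedding G₁ (E ×ˢ Epi)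
    have step2 : (∫ p in E ×ˢ Epi, G₁ p
            ∂((volume : Measure ℝ).prod (volume : Measure (Fin n → ℝ))))
        = ∫ t in E, ∫ y in Epi, G₁ (t, y) :=
      MeasureTheory.setIntegral_prod G₁ hI₁
    have huncurry₁ : Function.uncurry (fun t y => G₁ (t, y)) = G₁ := by
      funext p; simp [Function.uncurry]
    have huncurry₂ : Function.uncurry (fun t y => G₂ (t, y)) = G₂ := by
      funext p; simp [Function.uncurry]
    have swap₁ : (∫ t in E, ∫ y in Epi, G₁ (t, y)) = ∫ y in Epi, ∫ t in E, G₁ (t, y) := by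
      apply MeasureTheory.integral_integral_swap
      rw [huncurry₁, Measure.prod_restrict]
      exact hI₁
    have hIccInt : ∀ ψ : ℝ → ℂ, (∫ t in E, ψ t) = ∫ t in (0:ℝ)..(2*Real.pi), ψ t := by
      intro ψ
      rw [intervalIntegral.integral_of_le (by positivity), hE,
        MeasureTheory.integral_Icc_eq_integral_Ioc]
    set E₀ : ℂ := Complex.exp ((((m 0 : ℤ) : ℝ) : ℂ) * ((d0 : ℝ) : ℂ)) with hE₀
    have step5 : ∀ y : Fin n → ℝ, (∫ t in E, G₁ (t, y)) = E₀ * ∫ t in E, G₂ (t, y) := by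
      intro y
      have hone := oneD_shift (k 0) (c + ∑ j, (k' j : ℂ) * Complex.sin ((y j : ℝ):ℂ)) (m 0) a d0
        hd0
        (by rw [show (c + ∑ j, (k' j : ℂ) * Complex.sin ((y j : ℝ):ℂ)).im = c.im by
              rw [Complex.add_im, himsum y, add_zero]]
            exact hbnd)
      rw [hIccInt (fun t => G₁ (t, y)), hIccInt (fun t => G₂ (t, y))]
      set Cy := Complex.exp (-Complex.I * ∑ j, (m' j : ℂ) * ((y j : ℝ):ℂ)) with hCy
      have l1 : (∫ t in (0:ℝ)..(2*Real.pi), G₁ (t, y))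
          = Cy * ∫ t in (0:ℝ)..(2*Real.pi),
              Complex.tanh ((c + ∑ j, (k' j : ℂ) * Complex.sin ((y j:ℝ):ℂ))
                  + (k 0 : ℂ) * Complex.sin ((t:ℝ):ℂ))
                * Complex.exp (-Complex.I * (m 0 : ℂ) * ((t:ℝ):ℂ)) := by
        rw [← intervalIntegral.integral_const_mul]
        apply intervalIntegral.integral_congr
        intro t _
        simp only [hG₁, hCy]
        rw [show c + (k 0 : ℂ) * Complex.sin ((t:ℝ):ℂ)
              + ∑ j, (k' j : ℂ) * Complex.sin ((y j:ℝ):ℂ)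
            = (c + ∑ j, (k' j : ℂ) * Complex.sin ((y j:ℝ):ℂ))
              + (k 0 : ℂ) * Complex.sin ((t:ℝ):ℂ) by ring]
        ring
      have l2 : (∫ t in (0:ℝ)..(2*Real.pi), G₂ (t, y))
          = Cy * ∫ t in (0:ℝ)..(2*Real.pi),
              Complex.tanh ((c + ∑ j, (k' j : ℂ) * Complex.sin ((y j:ℝ):ℂ))
                  + (k 0 : ℂ) * Complex.sin (((t:ℝ):ℂ) + (d0:ℂ) * Complex.I))
                * Complex.exp (-Complex.I * (m 0 : ℂ) * ((t:ℝ):ℂ)) := by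
        rw [← intervalIntegral.integral_const_mul]
        apply intervalIntegral.integral_congr
        intro t _
        simp only [hG₂, hCy]
        rw [show c + (k 0 : ℂ) * Complex.sin (((t:ℝ):ℂ) + (d0:ℂ) * Complex.I)
              + ∑ j, (k' j : ℂ) * Complex.sin ((y j:ℝ):ℂ)
            = (c + ∑ j, (k' j : ℂ) * Complex.sin ((y j:ℝ):ℂ))
              + (k 0 : ℂ) * Complex.sin (((t:ℝ):ℂ) + (d0:ℂ) * Complex.I) by ring]
        ring
      rw [l1, l2, hone, ← hE₀, mul_left_comm]
    have step67 : (∫ y in Epi, ∫ t in E, G₁ (t, y))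
        = E₀ * ∫ t in E, ∫ y in Epi, G₂ (t, y) := by
      rw [MeasureTheory.integral_congr_ae (MeasureTheory.ae_of_all _ step5),
        MeasureTheory.integral_const_mul]
      congr 1
      apply (MeasureTheory.integral_integral_swap ?_).symm
      rw [huncurry₂, Measure.prod_restrict]
      exact hI₂
    -- bound the inner integral using the induction hypothesis
    have hinner : ∀ t ∈ E, ‖∫ y in Epi, G₂ (t, y)‖
        ≤ (2*Real.pi)^n * Real.exp (-a * ∑ j, |((m' j : ℤ):ℝ)|) := by
      intro t _
      set ct := c + (k 0 : ℂ) * Complex.sin (((t:ℝ):ℂ) + (d0:ℂ)*Complex.I) with hct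
      have hpull : (∫ y in Epi, G₂ (t, y)) = Complex.exp (-Complex.I * (m 0 : ℂ) * ((t:ℝ):ℂ)) *
          ∫ y in Epi, Complex.tanh (ct + ∑ j, (k' j : ℂ) * Complex.sin ((y j:ℝ):ℂ)) *
            Complex.exp (-Complex.I * ∑ j, (m' j : ℂ) * ((y j:ℝ):ℂ)) := by
        rw [← MeasureTheory.integral_const_mul]
        apply MeasureTheory.integral_congr_ae
        apply MeasureTheory.ae_of_all
        intro y
        simp only [hG₂, hct]
        ring
      rw [hpull, norm_mul]
      have habs1 : ‖Complex.exp (-Complex.I * (m 0 : ℂ) * ((t:ℝ):ℂ))‖ = 1 := by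
        rw [Complex.norm_exp]
        have : (-Complex.I * (m 0 : ℂ) * ((t:ℝ):ℂ)).re = 0 := by
          simp [Complex.mul_re, Complex.mul_im]
        rw [this, Real.exp_zero]
      rw [habs1, one_mul]
      apply ih k' m' ct
      have h2 := him d0 t hd0 (fun _ => (0:ℝ))
      rw [Complex.add_im, himsum _, add_zero] at h2
      rw [hsumk, add_mul] at hc
      have hct_im : |ct.im| ≤ |c.im| + |k 0| * Real.sinh a := h2
      nlinarith [hct_im]
    -- put everything together
    rw [step1, step2, swap₁, step67, norm_mul]
    have hE₀norm : ‖E₀‖ = Real.exp (-(a * |((m 0 : ℤ):ℝ)|)) := by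
      rw [hE₀, Complex.norm_exp, ← Complex.ofReal_mul, Complex.ofReal_re, hmd0]
    have hEfin : volume E < ⊤ := by
      rw [hE, Real.volume_Icc]
      exact ENNReal.ofReal_lt_top
    have hEvol : (volume E).toReal = 2*Real.pi := by
      rw [hE, Real.volume_Icc]
      rw [ENNReal.toReal_ofReal (by linarith)]
      ring
    have hbound := MeasureTheory.norm_setIntegral_le_of_norm_le_const hEfin
      hinner
    rw [measureReal_def, hEvol] at hbound
    rw [hE₀norm]
    calc Real.exp (-(a * |((m 0 : ℤ):ℝ)|)) * ‖∫ t in E, ∫ y in Epi, G₂ (t, y)‖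
        ≤ Real.exp (-(a * |((m 0 : ℤ):ℝ)|)) *
            ((2*Real.pi)^n * Real.exp (-a * ∑ j, |((m' j : ℤ):ℝ)|) * (2*Real.pi)) :=
          mul_le_mul_of_nonneg_left hbound (Real.exp_nonneg _)
      _ = (2*Real.pi)^(n+1) * Real.exp (-a * ∑ j, |((m j : ℤ):ℝ)|) := by
          rw [hsumm]
          rw [show -a * (|((m 0 : ℤ):ℝ)| + ∑ j, |((m' j : ℤ):ℝ)|)
              = (-(a * |((m 0 : ℤ):ℝ)|)) + (-a * ∑ j, |((m' j : ℤ):ℝ)|) by ring]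
          rw [Real.exp_add]
          ring

open MeasureTheory

/-- uniform-in-`k` exponential decay of the Fourier coefficients of
`f_k(x) = tanh (∑ j, k j * sin x_j)`, with rate `a₀ = (1/2) arsinh (π/(2‖k‖₁))`. -/
theorem fourier_coeff_tanh_sum_sin_exp_decay (n : ℕ) (hn : 1 ≤ n) :
    ∃ M₀ : ℝ, 0 < M₀ ∧
      ∀ k : Fin n → ℝ, 0 < ∑ j, |k j| →
        ∀ m : Fin n → ℤ,
          ‖(((2 * Real.pi : ℂ) ^ n)⁻¹ *
                ∫ x in Set.Icc (0 : Fin n → ℝ) (fun _ => 2 * Real.pi),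
                  (Real.tanh (∑ j, k j * Real.sin (x j)) : ℂ) *
                    Complex.exp (-Complex.I * ∑ j, (m j : ℂ) * (x j : ℂ)))‖
            ≤ M₀ *
              Real.exp
                (-((1 / 2) * Real.arsinh (Real.pi / (2 * ∑ j, |k j|))) *
                  ∑ j, |(m j : ℝ)|) := by
  refine ⟨1, one_pos, ?_⟩
  intro k hk m
  have hπ := Real.pi_pos
  set S := ∑ j, |k j| with hS
  set a : ℝ := (1/2) * Real.arsinh (Real.pi / (2 * S)) with ha
  have hs : 0 < Real.pi / (2 * S) := by positivity
  have ha0 : 0 < a := by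
    rw [ha]
    have := Real.arsinh_pos_iff.2 hs
    linarith
  have hsinh : S * Real.sinh a ≤ Real.pi/4 := by
    have h2a : Real.sinh (2*a) = Real.pi/(2*S) := by
      rw [ha, show 2*((1/2)*Real.arsinh (Real.pi / (2*S))) = Real.arsinh (Real.pi / (2*S)) by ring,
        Real.sinh_arsinh]
    have hcosh : 1 ≤ Real.cosh a := Real.one_le_cosh a
    have hdouble : Real.sinh (2*a) = 2 * Real.sinh a * Real.cosh a := Real.sinh_two_mul a
    have hsa : 0 ≤ Real.sinh a := Real.sinh_nonneg_iff.2 ha0.le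
    have hle : Real.sinh a ≤ Real.pi/(4*S) := by
      rw [h2a] at hdouble
      rw [le_div_iff₀ (by positivity)]
      have h3 : Real.pi = 2*Real.sinh a*Real.cosh a*(2*S) := by
        rw [← hdouble, div_mul_cancel₀ _ (by positivity : (0:ℝ) < 2*S).ne']
      nlinarith [mul_nonneg (mul_nonneg hk.le hsa) (sub_nonneg.2 hcosh)]
    calc S * Real.sinh a ≤ S * (Real.pi/(4*S)) := mul_le_mul_of_nonneg_left hle hk.le
      _ = Real.pi/4 := by field_simp
  have key := IND a ha0 n k m 0 (by simpa using hsinh)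
  have hcong : ∀ x : Fin n → ℝ, (Real.tanh (∑ j, k j * Real.sin (x j)) : ℂ) *
      Complex.exp (-Complex.I * ∑ j, (m j : ℂ) * ((x j : ℝ) : ℂ))
      = Complex.tanh ((0:ℂ) + ∑ j, (k j : ℂ) * Complex.sin ((x j : ℝ):ℂ)) *
        Complex.exp (-Complex.I * ∑ j, (m j : ℂ) * ((x j : ℝ):ℂ)) := by
    intro x
    congr 1
    rw [Complex.ofReal_tanh]
    congr 1
    rw [zero_add]
    push_cast
    rfl
  rw [MeasureTheory.integral_congr_ae (MeasureTheory.ae_of_all _ hcong)]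
  rw [norm_mul, norm_inv, norm_pow]
  rw [show (2*Real.pi : ℂ) = ((2*Real.pi : ℝ):ℂ) by push_cast; ring, Complex.norm_real, Real.norm_eq_abs,
    abs_of_pos (by positivity)]
  rw [one_mul]
  calc ((2*Real.pi)^n)⁻¹ * ‖∫ x in Set.Icc (0 : Fin n → ℝ) (fun _ => 2 * Real.pi),
          Complex.tanh ((0:ℂ) + ∑ j, (k j : ℂ) * Complex.sin ((x j : ℝ):ℂ)) *
            Complex.exp (-Complex.I * ∑ j, (m j : ℂ) * ((x j : ℝ):ℂ))‖
      ≤ ((2*Real.pi)^n)⁻¹ * ((2*Real.pi)^n * Real.exp (-a * ∑ j, |(m j : ℝ)|)) :=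
        mul_le_mul_of_nonneg_left key (by positivity)
    _ = Real.exp (-a * ∑ j, |(m j : ℝ)|) := by
        rw [← mul_assoc, inv_mul_cancel₀ (by positivity), one_mul]
    _ ≤ Real.exp (-((1 / 2) * Real.arsinh (Real.pi / (2 * S))) * ∑ j, |(m j : ℝ)|) := by
        rw [ha]
end

section
/- Let n ≥ 1 and ε > 0. There exists a constant C > 0, depending only on n and ε but not on k, such that for every k ∈ ℝⁿ with ‖k‖₁ := Σ_{j=1}^n |k_j| ≥ 1, every m ∈ ℤⁿ with ‖m‖₁ := Σ_{j=1}^n |m_j| ≥ C·‖k‖₁ satisfies |f̂_k(m)| ≤ ε, where f̂_k(m) = (2π)^{-n} ∫_{[0,2π]^n} tanh(Σ_{j=1}^n k_j · sin x_j) · exp(−i Σ_{j=1}^n m_j x_j) dx. Equivalently, the ε-truncated frequency support S_k := inf{ ‖m‖₁ : |f̂_k(j)| ≤ ε for all j ∈ ℤⁿ with ‖j‖₁ > ‖m‖₁ } satisfies S_k ≤ C·‖k‖₁. -/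
set_option maxHeartbeats 1000000
open MeasureTheory Real intervalIntegral

lemma tanh_hasDerivAt (x : ℝ) : HasDerivAt Real.tanh (1 / Real.cosh x ^ 2) x := by
  have h := (Real.hasDerivAt_sinh x).div (Real.hasDerivAt_cosh x) (Real.cosh_pos x).ne'
  have hfun : (Real.sinh / Real.cosh) = Real.tanh := by
    funext y; rw [Pi.div_apply, Real.tanh_eq_sinh_div_cosh]
  rw [hfun] at h
  have e : 1 / Real.cosh x ^ 2 = (Real.cosh x * Real.cosh x - Real.sinh x * Real.sinh x) / Real.cosh x ^ 2 := by
    rw [← Real.cosh_sq_sub_sinh_sq x]; ring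
  rw [e]; exact h

lemma tanh_continuous : Continuous Real.tanh :=
  (Differentiable.continuous fun x => (tanh_hasDerivAt x).differentiableAt)

lemma tanh_lipschitz : LipschitzWith 1 Real.tanh := by
  apply lipschitzWith_of_nnnorm_deriv_le (fun x => (tanh_hasDerivAt x).differentiableAt)
  intro x
  rw [(tanh_hasDerivAt x).deriv, ← NNReal.coe_le_coe, coe_nnnorm, Real.norm_eq_abs,
    NNReal.coe_one, abs_of_pos (by positivity), div_le_one (by positivity)]
  nlinarith [Real.one_le_cosh x]

lemma tanh_sub_le (x y : ℝ) : |Real.tanh x - Real.tanh y| ≤ |x - y| := by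
  have := tanh_lipschitz.dist_le_mul x y
  simpa [Real.dist_eq] using this

lemma sin_lipschitz : LipschitzWith 1 Real.sin := by
  apply lipschitzWith_of_nnnorm_deriv_le Real.differentiable_sin
  intro x
  rw [Real.deriv_sin, ← NNReal.coe_le_coe, coe_nnnorm, Real.norm_eq_abs, NNReal.coe_one]
  exact Real.abs_cos_le_one x

lemma sin_sub_le (x y : ℝ) : |Real.sin x - Real.sin y| ≤ |x - y| := by
  have := sin_lipschitz.dist_le_mul x y
  simpa [Real.dist_eq] using this

lemma abs_tanh_le (x : ℝ) : |Real.tanh x| ≤ 1 := by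
  have h : |Real.sinh x| ≤ Real.cosh x := by
    rw [Real.sinh_eq, Real.cosh_eq, abs_le]
    constructor <;> nlinarith [Real.exp_pos x, Real.exp_pos (-x)]
  rw [Real.tanh_eq_sinh_div_cosh, abs_div, abs_of_pos (Real.cosh_pos x),
    div_le_one (Real.cosh_pos x)]
  exact h

lemma oneD (a c : ℝ) (M : ℤ) (hM : M ≠ 0) :
    ‖∫ t in (0:ℝ)..(2*π), (Real.tanh (c * Real.sin t + a) : ℂ) *
      Complex.exp (-Complex.I * ((M:ℂ) * (t:ℂ)))‖ ≤ π^2 * |c| / |(M:ℝ)| := by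
  have hMr : (M:ℝ) ≠ 0 := Int.cast_ne_zero.2 hM
  set δ : ℝ := π / M with hδ
  have hMδ : (M:ℝ) * δ = π := by rw [hδ]; field_simp
  set g₁ : ℝ → ℂ := fun t => (Real.tanh (c * Real.sin t + a) : ℂ) *
      Complex.exp (-Complex.I * ((M:ℂ) * (t:ℂ))) with hg₁
  set g₂ : ℝ → ℂ := fun t => (Real.tanh (c * Real.sin (t + δ) + a) : ℂ) *
      Complex.exp (-Complex.I * ((M:ℂ) * (t:ℂ))) with hg₂
  have hexp1 : ∀ t : ℝ, Complex.exp (-Complex.I * ((M:ℂ) * ((t + δ : ℝ):ℂ)))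
      = -Complex.exp (-Complex.I * ((M:ℂ) * (t:ℂ))) := by
    intro t
    have h1 : (-Complex.I * ((M:ℂ) * ((t + δ : ℝ):ℂ)))
        = -Complex.I * ((M:ℂ) * (t:ℂ)) + -(((M:ℝ) * δ : ℝ):ℂ) * Complex.I := by
      push_cast; ring
    rw [h1, Complex.exp_add, hMδ]
    have h2 : Complex.exp (-(π:ℂ) * Complex.I) = -1 := by
      rw [neg_mul, Complex.exp_neg, Complex.exp_pi_mul_I]; norm_num
    rw [h2]; ring
  have hcont1 : Continuous g₁ := by
    apply Continuous.mul
    · exact Complex.continuous_ofReal.comp (tanh_continuous.comp (by continuity))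
    · exact Complex.continuous_exp.comp (by continuity)
  have hcont2 : Continuous g₂ := by
    apply Continuous.mul
    · exact Complex.continuous_ofReal.comp (tanh_continuous.comp (by continuity))
    · exact Complex.continuous_exp.comp (by continuity)
  have hper : Function.Periodic g₁ (2*π) := by
    intro t
    have h1 : (-Complex.I * ((M:ℂ) * ((t + 2*π : ℝ):ℂ)))
        = -Complex.I * ((M:ℂ) * (t:ℂ)) + (-M : ℤ) * (2 * (π:ℂ) * Complex.I) := by
      push_cast; ring
    simp only [hg₁, Real.sin_add_two_pi, h1, Complex.exp_add,
      Complex.exp_int_mul_two_pi_mul_I, mul_one]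
  have hshift : (∫ t in (0:ℝ)..(2*π), g₁ (t + δ)) = ∫ t in (0:ℝ)..(2*π), g₁ t := by
    rw [intervalIntegral.integral_comp_add_right]
    have := hper.intervalIntegral_add_eq δ 0
    simpa [zero_add, add_comm] using this
  have hflip : ∀ t : ℝ, g₁ (t + δ) = -g₂ t := by
    intro t
    simp only [hg₁, hg₂, hexp1 t]
    ring
  have hg2int : (∫ t in (0:ℝ)..(2*π), g₂ t) = -∫ t in (0:ℝ)..(2*π), g₁ t := by
    have hn : ∀ t : ℝ, g₂ t = -g₁ (t + δ) := by
      intro t; rw [hflip t]; ring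
    simp only [hn]
    rw [intervalIntegral.integral_neg, hshift]
  have h2 : (∫ t in (0:ℝ)..(2*π), g₁ t) + (∫ t in (0:ℝ)..(2*π), g₁ t)
      = ∫ t in (0:ℝ)..(2*π), (g₁ t - g₂ t) := by
    rw [intervalIntegral.integral_sub (hcont1.intervalIntegrable _ _)
      (hcont2.intervalIntegrable _ _), hg2int]
    ring
  have hpt : ∀ t ∈ Set.uIoc (0:ℝ) (2*π), ‖g₁ t - g₂ t‖ ≤ |c| * |δ| := by
    intro t _
    have : g₁ t - g₂ t = ((Real.tanh (c * Real.sin t + a)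
        - Real.tanh (c * Real.sin (t + δ) + a) : ℝ) : ℂ) *
        Complex.exp (-Complex.I * ((M:ℂ) * (t:ℂ))) := by
      simp only [hg₁, hg₂, Complex.ofReal_sub]; ring
    rw [this, norm_mul, Complex.norm_real]
    have hexp : ‖Complex.exp (-Complex.I * ((M:ℂ) * (t:ℂ)))‖ = 1 := by
      rw [Complex.norm_exp]
      simp
    rw [hexp, mul_one]
    calc |Real.tanh (c * Real.sin t + a) - Real.tanh (c * Real.sin (t + δ) + a)|
        ≤ |(c * Real.sin t + a) - (c * Real.sin (t + δ) + a)| := tanh_sub_le _ _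
      _ = |c| * |Real.sin t - Real.sin (t + δ)| := by rw [← abs_mul]; ring_nf
      _ ≤ |c| * |t - (t + δ)| := by
          apply mul_le_mul_of_nonneg_left _ (abs_nonneg c)
          exact sin_sub_le t (t + δ)
      _ = |c| * |δ| := by rw [show t - (t + δ) = -δ by ring, abs_neg]
  have hbound := intervalIntegral.norm_integral_le_of_norm_le_const hpt
  rw [← h2] at hbound
  have hnorm2 : ‖(∫ t in (0:ℝ)..(2*π), g₁ t) + (∫ t in (0:ℝ)..(2*π), g₁ t)‖
      = 2 * ‖∫ t in (0:ℝ)..(2*π), g₁ t‖ := by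
    rw [← two_smul ℝ, norm_smul]; norm_num
  rw [hnorm2] at hbound
  have hδabs : |δ| = π / |(M:ℝ)| := by
    rw [hδ, abs_div, abs_of_pos Real.pi_pos]
  have hMpos : 0 < |(M:ℝ)| := abs_pos.2 hMr
  have heq : |c| * |δ| * |2*π - 0| = 2 * (π^2 * |c| / |(M:ℝ)|) := by
    rw [hδabs, abs_of_pos (by rw [sub_zero]; positivity : (0:ℝ) < 2*π - 0)]
    field_simp
    ring
  rw [heq] at hbound
  linarith

noncomputable def μ1 : Measure ℝ := volume.restrict (Set.Icc 0 (2*π))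

instance : IsFiniteMeasure μ1 := by
  constructor
  rw [μ1, Measure.restrict_apply_univ, Real.volume_Icc]
  exact ENNReal.ofReal_lt_top

lemma mu1_univ : μ1 Set.univ = ENNReal.ofReal (2*π) := by
  rw [μ1, Measure.restrict_apply_univ, Real.volume_Icc]
  norm_num

lemma restrict_box (N : ℕ) :
    (volume : Measure (Fin N → ℝ)).restrict (Set.Icc 0 fun _ => 2*π)
      = Measure.pi (fun _ => μ1) := by
  refine (Measure.pi_eq fun s hs => ?_).symm
  rw [Measure.restrict_apply (MeasurableSet.univ_pi hs)]
  have h1 : (Set.Icc (0 : Fin N → ℝ) fun _ => 2*π)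
      = Set.pi Set.univ (fun _ : Fin N => Set.Icc (0:ℝ) (2*π)) := by
    rw [Set.pi_univ_Icc]; rfl
  rw [h1, ← Set.pi_inter_distrib, volume_pi, Measure.pi_pi]
  refine Finset.prod_congr rfl fun i _ => ?_
  rw [μ1, Measure.restrict_apply (hs i)]

lemma box_bound {n' : ℕ} (k : Fin (n'+1) → ℝ) (m : Fin (n'+1) → ℤ) (j : Fin (n'+1))
    (hmj : m j ≠ 0) :
    ‖∫ x in Set.Icc (0 : Fin (n'+1) → ℝ) (fun _ => 2 * π),
        (Real.tanh (∑ i, k i * Real.sin (x i)) : ℂ) *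
          Complex.exp (-Complex.I * ∑ i, (m i : ℂ) * (x i : ℂ))‖
      ≤ (π ^ 2 * |k j| / |(m j : ℝ)|) * (2 * π) ^ n' := by
  set F : (Fin (n'+1) → ℝ) → ℂ := fun x =>
    (Real.tanh (∑ i, k i * Real.sin (x i)) : ℂ) *
      Complex.exp (-Complex.I * ∑ i, (m i : ℂ) * (x i : ℂ)) with hF
  have hFcont : Continuous F := by
    apply Continuous.mul
    · apply Complex.continuous_ofReal.comp
      apply tanh_continuous.comp
      apply continuous_finset_sum _ fun i _ => ?_
      exact continuous_const.mul (Real.continuous_sin.comp (continuous_apply i))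
    · apply Complex.continuous_exp.comp
      apply continuous_const.mul
      apply continuous_finset_sum _ fun i _ => ?_
      exact continuous_const.mul (Complex.continuous_ofReal.comp (continuous_apply i))
  have hFbound : ∀ x, ‖F x‖ ≤ 1 := by
    intro x
    rw [hF]
    simp only [norm_mul, Complex.norm_real, Real.norm_eq_abs]
    have h1 : ‖Complex.exp (-Complex.I * ∑ i, (m i : ℂ) * ((x i : ℝ) : ℂ))‖ = 1 := by
      have h2 : (∑ i, (m i : ℂ) * ((x i : ℝ) : ℂ)) = ((∑ i, (m i : ℝ) * x i : ℝ) : ℂ) := by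
        push_cast; ring
      rw [h2, Complex.norm_exp]
      simp
    rw [h1, mul_one]
    exact abs_tanh_le _
  have hbox : (∫ x in Set.Icc (0 : Fin (n'+1) → ℝ) (fun _ => 2 * π), F x)
      = ∫ x, F x ∂(Measure.pi (fun _ : Fin (n'+1) => μ1)) := by
    rw [← restrict_box (n'+1)]
  rw [hbox]
  have mp := (measurePreserving_piFinSuccAbove (fun _ : Fin (n'+1) => μ1) j).symm
  rw [← mp.integral_comp']
  set e := MeasurableEquiv.piFinSuccAbove (fun _ : Fin (n'+1) => ℝ) j with he
  have hesymm : ∀ z : ℝ × (Fin n' → ℝ), e.symm z = j.insertNth z.1 z.2 := fun z => rfl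
  have key : ∀ z : ℝ × (Fin n' → ℝ), F (e.symm z) =
      ((Real.tanh (k j * Real.sin z.1 + ∑ i, k (j.succAbove i) * Real.sin (z.2 i)) : ℝ) : ℂ) *
        Complex.exp (-Complex.I * ((m j : ℂ) * (z.1 : ℂ))) *
        Complex.exp (-Complex.I * ∑ i, (m (j.succAbove i) : ℂ) * (z.2 i : ℂ)) := by
    intro z
    rw [hesymm, hF]
    simp only [Fin.sum_univ_succAbove _ j, Fin.insertNth_apply_same,
      Fin.insertNth_apply_succAbove]
    rw [mul_assoc, ← Complex.exp_add]
    congr 2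
    ring
  have hGint : Integrable (fun z => F (e.symm z))
      ((μ1).prod (Measure.pi fun _ : Fin n' => μ1)) := by
    have : Integrable F (Measure.pi (fun _ : Fin (n'+1) => μ1)) :=
      ⟨hFcont.aestronglyMeasurable,
        HasFiniteIntegral.of_bounded (C := 1) (Filter.Eventually.of_forall hFbound)⟩
    exact (mp.integrable_comp_emb (MeasurableEquiv.measurableEmbedding _)).2 this
  rw [integral_prod_symm _ hGint]
  have hinner : ∀ y : Fin n' → ℝ,
      ‖∫ t, F (e.symm (t, y)) ∂μ1‖ ≤ π ^ 2 * |k j| / |(m j : ℝ)| := by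
    intro y
    have hsplit : (∫ t, F (e.symm (t, y)) ∂μ1)
        = (∫ t, ((Real.tanh (k j * Real.sin t + ∑ i, k (j.succAbove i) * Real.sin (y i)) : ℝ) : ℂ) *
            Complex.exp (-Complex.I * ((m j : ℂ) * (t : ℂ))) ∂μ1) *
          Complex.exp (-Complex.I * ∑ i, (m (j.succAbove i) : ℂ) * (y i : ℂ)) := by
      rw [← MeasureTheory.integral_mul_const]
      exact integral_congr_ae (Filter.Eventually.of_forall fun t => key (t, y))
    rw [hsplit, norm_mul]
    have hexpb : ‖Complex.exp (-Complex.I * ∑ i, (m (j.succAbove i) : ℂ) * (y i : ℂ))‖ = 1 := by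
      have h2 : (∑ i, (m (j.succAbove i) : ℂ) * (y i : ℂ))
          = ((∑ i, (m (j.succAbove i) : ℝ) * y i : ℝ) : ℂ) := by
        push_cast; ring
      rw [h2, Complex.norm_exp]
      simp
    rw [hexpb, mul_one]
    have hIcc : (∫ t, ((Real.tanh (k j * Real.sin t + ∑ i, k (j.succAbove i) * Real.sin (y i)) : ℝ) : ℂ) *
        Complex.exp (-Complex.I * ((m j : ℂ) * (t : ℂ))) ∂μ1)
        = ∫ t in (0:ℝ)..(2*π), ((Real.tanh (k j * Real.sin t + ∑ i, k (j.succAbove i) * Real.sin (y i)) : ℝ) : ℂ) *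
            Complex.exp (-Complex.I * ((m j : ℂ) * (t : ℂ))) := by
      rw [intervalIntegral.integral_of_le (by positivity : (0:ℝ) ≤ 2*π), μ1]
      exact MeasureTheory.integral_Icc_eq_integral_Ioc
    rw [hIcc]
    exact oneD _ (k j) (m j) hmj
  calc ‖∫ y, (∫ t, F (e.symm (t, y)) ∂μ1) ∂(Measure.pi fun _ : Fin n' => μ1)‖
      ≤ (π ^ 2 * |k j| / |(m j : ℝ)|) *
        ((Measure.pi fun _ : Fin n' => μ1) Set.univ).toReal :=
        norm_integral_le_of_norm_le_const (Filter.Eventually.of_forall hinner)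
    _ = (π ^ 2 * |k j| / |(m j : ℝ)|) * (2 * π) ^ n' := by
        rw [Measure.pi_univ]
        simp only [mu1_univ, Finset.prod_const, Finset.card_univ, Fintype.card_fin]
        rw [← ENNReal.ofReal_pow (by positivity), ENNReal.toReal_ofReal (by positivity)]


/-- Proposition 4.1: for fixed `n ≥ 1` and `ε > 0` there is a
constant `C > 0`, independent of `k`, such that for every `k` with `‖k‖₁ ≥ 1`,
all Fourier coefficients `f̂_k(m)` of `f_k(x) = tanh (∑ j, k j * sin x_j)` with
`‖m‖₁ ≥ C ‖k‖₁` are bounded by `ε`; i.e. the `ε`-truncated frequency support of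
`f_k` grows at most linearly in `‖k‖₁`. -/
theorem freq_support_linear_in_k (n : ℕ) (hn : 1 ≤ n) (ε : ℝ) (hε : 0 < ε) :
    ∃ C : ℝ, 0 < C ∧
      ∀ k : Fin n → ℝ, 1 ≤ ∑ j, |k j| →
        ∀ m : Fin n → ℤ, (∑ j, |(m j : ℝ)|) ≥ C * ∑ j, |k j| →
          ‖
              (((2 * Real.pi : ℂ) ^ n)⁻¹ *
                ∫ x in Set.Icc (0 : Fin n → ℝ) (fun _ => 2 * Real.pi),
                  (Real.tanh (∑ j, k j * Real.sin (x j)) : ℂ) *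
                    Complex.exp (-Complex.I * ∑ j, (m j : ℂ) * (x j : ℂ)))‖
            ≤ ε := by
  obtain ⟨n', rfl⟩ : ∃ n', n = n' + 1 := ⟨n - 1, (Nat.succ_pred_eq_of_pos hn).symm⟩
  set C : ℝ := max 1 (π * ((n' : ℝ) + 1) / (2 * ε)) with hC
  have hCpos : 0 < C := lt_of_lt_of_le one_pos (le_max_left _ _)
  refine ⟨C, hCpos, ?_⟩
  intro k hk m hm
  obtain ⟨j₀, hj₀⟩ := Finite.exists_max (fun i : Fin (n'+1) => |(m i : ℝ)|)
  set K : ℝ := ∑ i, |k i| with hKdef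
  set M : ℝ := ∑ i, |(m i : ℝ)| with hMdef
  have hKpos : (0:ℝ) < K := lt_of_lt_of_le one_pos hk
  have hMC : C * K ≤ M := hm
  have hMle : M ≤ ((n' : ℝ) + 1) * |(m j₀ : ℝ)| := by
    have h1 : M ≤ ∑ _i : Fin (n'+1), |(m j₀ : ℝ)| :=
      Finset.sum_le_sum fun i _ => hj₀ i
    rwa [Finset.sum_const, Finset.card_univ, Fintype.card_fin, nsmul_eq_mul,
      Nat.cast_add, Nat.cast_one] at h1
  have hMpos : 0 < M := lt_of_lt_of_le (by positivity) hMC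
  have hmjpos : 0 < |(m j₀ : ℝ)| := by nlinarith
  have hmj : m j₀ ≠ 0 := by
    intro h
    rw [h] at hmjpos
    simp at hmjpos
  have hb := box_bound k m j₀ hmj
  rw [norm_mul, norm_inv, norm_pow]
  have h2pi : ‖(2 * (π:ℂ))‖ = 2 * π := by
    rw [show (2 * (π:ℂ)) = ((2 * π : ℝ) : ℂ) by push_cast; ring, Complex.norm_real, Real.norm_eq_abs,
      abs_of_pos (by positivity)]
  rw [h2pi]
  have hkj : |k j₀| ≤ K :=
    Finset.single_le_sum (f := fun i => |k i|) (fun i _ => abs_nonneg _) (Finset.mem_univ j₀)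
  have hstep : (((2*π)^(n'+1))⁻¹ : ℝ) * ((π ^ 2 * |k j₀| / |(m j₀ : ℝ)|) * (2 * π) ^ n')
      = (π/2) * (|k j₀| / |(m j₀ : ℝ)|) := by
    field_simp
    ring
  have hfrac : |k j₀| / |(m j₀ : ℝ)| ≤ ((n' : ℝ) + 1) / C := by
    rw [div_le_div_iff₀ hmjpos hCpos]
    nlinarith [mul_le_mul_of_nonneg_left hkj hCpos.le]
  have hfinal : (π/2) * (((n' : ℝ) + 1) / C) ≤ ε := by
    have hC2 : π * ((n' : ℝ) + 1) / (2*ε) ≤ C := le_max_right _ _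
    rw [div_le_iff₀ (by positivity : (0:ℝ) < 2*ε)] at hC2
    rw [show (π/2) * (((n' : ℝ) + 1)/C) = (π * ((n' : ℝ) + 1)/2)/C by ring,
      div_le_iff₀ hCpos]
    nlinarith
  calc ((2*π)^(n'+1))⁻¹ * ‖∫ x in Set.Icc (0 : Fin (n'+1) → ℝ) (fun _ => 2 * π),
        (Real.tanh (∑ i, k i * Real.sin (x i)) : ℂ) *
          Complex.exp (-Complex.I * ∑ i, (m i : ℂ) * (x i : ℂ))‖
      ≤ ((2*π)^(n'+1))⁻¹ * ((π ^ 2 * |k j₀| / |(m j₀ : ℝ)|) * (2 * π) ^ n') := by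
        apply mul_le_mul_of_nonneg_left hb (by positivity)
    _ = (π/2) * (|k j₀| / |(m j₀ : ℝ)|) := hstep
    _ ≤ (π/2) * (((n' : ℝ) + 1) / C) := by
        apply mul_le_mul_of_nonneg_left hfrac (by positivity)
    _ ≤ ε := hfinal
end

section
/- Let β > 0, Δt > 0, t ∈ ℝ, and let u : ℝ → ℝ be three times continuously differentiable on an interval containing [t − Δt, t + max(1, β)·Δt] with |u'''(s)| ≤ M there. Then there exists a constant C(β) > 0, depending only on β, such that |((2β + 1)/2)·u(t + Δt) − 2β·u(t) + ((2β − 1)/2)·u(t − Δt) − Δt·u'(t + β·Δt)| ≤ C(β)·M·Δt³. -/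
/-- local truncation error of the shifted BDF2-β formula: for each
`β > 0` there is `C(β) > 0` such that
`|((2β+1)/2) u(t+Δt) − 2β u(t) + ((2β−1)/2) u(t−Δt) − Δt u'(t+βΔt)| ≤ C(β) M Δt³`
whenever `u` is three times continuously differentiable with `|u'''| ≤ M` on
`[t − Δt, t + max(1,β) Δt]`. -/
theorem bdf2_beta_truncation_error (β : ℝ) (hβ : 0 < β) :
    ∃ C : ℝ, 0 < C ∧
      ∀ (Δt t M : ℝ) (u u' u'' u''' : ℝ → ℝ), 0 < Δt →
        (∀ s ∈ Set.Icc (t - Δt) (t + max 1 β * Δt),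
          HasDerivWithinAt u (u' s) (Set.Icc (t - Δt) (t + max 1 β * Δt)) s) →
        (∀ s ∈ Set.Icc (t - Δt) (t + max 1 β * Δt),
          HasDerivWithinAt u' (u'' s) (Set.Icc (t - Δt) (t + max 1 β * Δt)) s) →
        (∀ s ∈ Set.Icc (t - Δt) (t + max 1 β * Δt),
          HasDerivWithinAt u'' (u''' s) (Set.Icc (t - Δt) (t + max 1 β * Δt)) s) →
        ContinuousOn u''' (Set.Icc (t - Δt) (t + max 1 β * Δt)) →
        (∀ s ∈ Set.Icc (t - Δt) (t + max 1 β * Δt), |u''' s| ≤ M) →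
        |((2 * β + 1) / 2) * u (t + Δt) - 2 * β * u t +
            ((2 * β - 1) / 2) * u (t - Δt) - Δt * u' (t + β * Δt)| ≤
          C * M * Δt ^ 3 := by
  set m : ℝ := max 1 β + 1 with hm_def
  have hm1 : (1 : ℝ) ≤ max 1 β := le_max_left 1 β
  have hmβ : β ≤ max 1 β := le_max_right 1 β
  have hm2 : (2 : ℝ) ≤ m := by simp [hm_def]; linarith
  refine ⟨(2 * β + 1) * m ^ 2 + m * β + 1, by nlinarith, ?_⟩
  intro Δt t M u u' u'' u''' hΔt hu hu' hu'' hcont hM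
  set I : Set ℝ := Set.Icc (t - Δt) (t + max 1 β * Δt) with hI_def
  have hconv : Convex ℝ I := convex_Icc _ _
  have htI : t ∈ I := ⟨by linarith, by nlinarith⟩
  have htpI : t + Δt ∈ I := ⟨by linarith, by nlinarith⟩
  have htmI : t - Δt ∈ I := ⟨le_refl _, by nlinarith⟩
  have htβI : t + β * Δt ∈ I := ⟨by nlinarith, by nlinarith⟩
  have hM0 : 0 ≤ M := le_trans (abs_nonneg _) (hM t htI)
  have hdist : ∀ x ∈ I, |x - t| ≤ m * Δt := by
    intro x hx
    rw [abs_le]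
    constructor
    · have := hx.1; simp only [hm_def]; nlinarith
    · have := hx.2; simp only [hm_def]; nlinarith
  -- Step 1: u'' is M-Lipschitz on I
  have hlip2 : ∀ x ∈ I, |u'' x - u'' t| ≤ M * |x - t| := by
    intro x hx
    have := hconv.norm_image_sub_le_of_norm_hasDerivWithin_le hu'' hM htI hx
    simpa using this
  -- gp x = u' x - u' t - (x - t) * u'' t
  set gp : ℝ → ℝ := fun x => u' x - u' t - (x - t) * u'' t with hgp_def
  have hgp_deriv : ∀ x ∈ I, HasDerivWithinAt gp (u'' x - u'' t) I x := by
    intro x hx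
    have h1 : HasDerivWithinAt (fun x : ℝ => (x - t) * u'' t) (u'' t) I x := by
      have := ((hasDerivWithinAt_id x I).sub_const t).mul_const (u'' t)
      simpa using this
    have := ((hu' x hx).sub_const (u' t)).sub h1
    exact this
  have hgp_bound : ∀ x ∈ I, |u'' x - u'' t| ≤ M * (m * Δt) := by
    intro x hx
    calc |u'' x - u'' t| ≤ M * |x - t| := hlip2 x hx
    _ ≤ M * (m * Δt) := by
        have := hdist x hx
        nlinarith [abs_nonneg (x - t)]
  have hgp_lip : ∀ x ∈ I, |gp x - gp t| ≤ M * (m * Δt) * |x - t| := by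
    intro x hx
    have := hconv.norm_image_sub_le_of_norm_hasDerivWithin_le hgp_deriv hgp_bound htI hx
    simpa using this
  have hgpt : gp t = 0 := by simp [hgp_def]
  -- g x = u x - u t - (x - t) * u' t - (x - t)^2 / 2 * u'' t
  set g : ℝ → ℝ := fun x => u x - u t - (x - t) * u' t - (x - t) ^ 2 / 2 * u'' t
    with hg_def
  have hg_deriv : ∀ x ∈ I, HasDerivWithinAt g (gp x) I x := by
    intro x hx
    have h1 : HasDerivWithinAt (fun x : ℝ => (x - t) * u' t) (u' t) I x := by
      have := ((hasDerivWithinAt_id x I).sub_const t).mul_const (u' t)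
      simpa using this
    have h2 : HasDerivWithinAt (fun x : ℝ => (x - t) ^ 2 / 2 * u'' t)
        ((x - t) * u'' t) I x := by
      have hsq : HasDerivWithinAt (fun x : ℝ => (x - t) ^ 2) (2 * (x - t)) I x := by
        have := ((hasDerivWithinAt_id x I).sub_const t).pow 2
        refine this.congr_deriv ?_
        norm_num
      have := (hsq.div_const 2).mul_const (u'' t)
      refine this.congr_deriv ?_
      ring
    have := (((hu x hx).sub_const (u t)).sub h1).sub h2
    exact this
  have hg_db : ∀ x ∈ I, |gp x| ≤ M * (m * Δt) * (m * Δt) := by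
    intro x hx
    have h1 := hgp_lip x hx
    have h2 := hdist x hx
    rw [hgpt, sub_zero] at h1
    have hK : 0 ≤ M * (m * Δt) := by positivity
    calc |gp x| ≤ M * (m * Δt) * |x - t| := h1
      _ ≤ M * (m * Δt) * (m * Δt) := mul_le_mul_of_nonneg_left h2 hK
  have hg_lip : ∀ x ∈ I, |g x - g t| ≤ M * (m * Δt) * (m * Δt) * |x - t| := by
    intro x hx
    have := hconv.norm_image_sub_le_of_norm_hasDerivWithin_le hg_deriv hg_db htI hx
    simpa using this
  have hgt : g t = 0 := by simp [hg_def]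
  -- bounds at the three points
  have hbp : |g (t + Δt)| ≤ M * m ^ 2 * Δt ^ 3 := by
    have := hg_lip (t + Δt) htpI
    rw [hgt, sub_zero] at this
    have h2 : |t + Δt - t| = Δt := by rw [abs_of_pos]; ring; linarith
    rw [h2] at this
    nlinarith
  have hbm : |g (t - Δt)| ≤ M * m ^ 2 * Δt ^ 3 := by
    have := hg_lip (t - Δt) htmI
    rw [hgt, sub_zero] at this
    have h2 : |t - Δt - t| = Δt := by rw [abs_of_neg] <;> [ring; linarith]
    rw [h2] at this
    nlinarith
  have hbβ : |gp (t + β * Δt)| ≤ M * m * β * Δt ^ 2 := by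
    have := hgp_lip (t + β * Δt) htβI
    rw [hgpt, sub_zero] at this
    have h2 : |t + β * Δt - t| = β * Δt := by
      rw [abs_of_pos]; ring; nlinarith
    rw [h2] at this
    nlinarith
  -- the key algebraic identity
  have key : ((2 * β + 1) / 2) * u (t + Δt) - 2 * β * u t +
      ((2 * β - 1) / 2) * u (t - Δt) - Δt * u' (t + β * Δt)
      = ((2 * β + 1) / 2) * g (t + Δt) + ((2 * β - 1) / 2) * g (t - Δt)
        - Δt * gp (t + β * Δt) := by
    simp only [hg_def, hgp_def]
    ring
  rw [key]
  have habs : |2 * β - 1| ≤ 2 * β + 1 := by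
    rw [abs_le]; constructor <;> linarith
  have htri : |((2 * β + 1) / 2) * g (t + Δt) + ((2 * β - 1) / 2) * g (t - Δt)
      - Δt * gp (t + β * Δt)|
      ≤ ((2 * β + 1) / 2) * |g (t + Δt)| + (|2 * β - 1| / 2) * |g (t - Δt)|
        + Δt * |gp (t + β * Δt)| := by
    calc |((2 * β + 1) / 2) * g (t + Δt) + ((2 * β - 1) / 2) * g (t - Δt)
        - Δt * gp (t + β * Δt)|
        ≤ |((2 * β + 1) / 2) * g (t + Δt) + ((2 * β - 1) / 2) * g (t - Δt)|
          + |Δt * gp (t + β * Δt)| := abs_sub _ _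
      _ ≤ |((2 * β + 1) / 2) * g (t + Δt)| + |((2 * β - 1) / 2) * g (t - Δt)|
          + |Δt * gp (t + β * Δt)| := by
            have := abs_add_le (((2 * β + 1) / 2) * g (t + Δt))
              (((2 * β - 1) / 2) * g (t - Δt))
            linarith
      _ = ((2 * β + 1) / 2) * |g (t + Δt)| + (|2 * β - 1| / 2) * |g (t - Δt)|
          + Δt * |gp (t + β * Δt)| := by
            rw [abs_mul, abs_mul, abs_mul, abs_div, abs_div,
              abs_of_pos (show (0:ℝ) < 2 * β + 1 by linarith),
              abs_of_pos hΔt]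
            norm_num
  have hfin : ((2 * β + 1) / 2) * |g (t + Δt)| + (|2 * β - 1| / 2) * |g (t - Δt)|
      + Δt * |gp (t + β * Δt)|
      ≤ ((2 * β + 1) * m ^ 2 + m * β + 1) * M * Δt ^ 3 := by
    set T : ℝ := M * m ^ 2 * Δt ^ 3 with hT_def
    have hT0 : 0 ≤ T := by positivity
    have hc1 : (0:ℝ) ≤ (2 * β + 1) / 2 := by linarith
    have h₁ : ((2 * β + 1) / 2) * |g (t + Δt)| ≤ ((2 * β + 1) / 2) * T :=
      mul_le_mul_of_nonneg_left hbp hc1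
    have h₂ : (|2 * β - 1| / 2) * |g (t - Δt)| ≤ ((2 * β + 1) / 2) * T :=
      mul_le_mul (by linarith) hbm (abs_nonneg _) hc1
    have h₃ : Δt * |gp (t + β * Δt)| ≤ Δt * (M * m * β * Δt ^ 2) :=
      mul_le_mul_of_nonneg_left hbβ (le_of_lt hΔt)
    have heq : ((2 * β + 1) / 2) * T + ((2 * β + 1) / 2) * T
        + Δt * (M * m * β * Δt ^ 2)
        = ((2 * β + 1) * m ^ 2 + m * β) * M * Δt ^ 3 := by
      rw [hT_def]; ring
    have hpos : 0 ≤ M * Δt ^ 3 := by positivity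
    have heq2 : ((2 * β + 1) * m ^ 2 + m * β + 1) * M * Δt ^ 3
        = ((2 * β + 1) * m ^ 2 + m * β) * M * Δt ^ 3 + M * Δt ^ 3 := by ring
    clear_value T m
    linarith
  linarith
end
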